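/- Discrete energy stability: if (U,v,ω) = (U*,v*,ω*) − (ρ⁻¹Gp, m⁻¹Σ(pGH)h², 𝕀⁻¹Σ(pJ^h)h²) where p solves L^h p = −D(HU*) + v*·GH + ω*·J^h, then the discrete kinetic energies satisfy E_h(U*,v*,ω*) ≥ E_h(U,v,ω), where E_h(U,v,ω) = ½∫ρH U·U dΩ^h + ½m|v|² + ½ω·𝕀ω. -/

import Mathlib

/-- `(G_x H)_{ij} = (H_{i+1/2,j} − H_{i−1/2,j})/h`, where `Hx (i,j)` stands for `H_{i+1/2,j}`. -/
noncomputable def GHx (h : ℝ) (Hx : ℤ × ℤ → ℝ) (ij : ℤ × ℤ) : ℝ :=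
  (Hx ij - Hx (ij.1 - 1, ij.2)) / h

/-- `(G_y H)_{ij} = (H_{i,j+1/2} − H_{i,j−1/2})/h`, where `Hy (i,j)` stands for `H_{i,j+1/2}`. -/
noncomputable def GHy (h : ℝ) (Hy : ℤ × ℤ → ℝ) (ij : ℤ × ℤ) : ℝ :=
  (Hy ij - Hy (ij.1, ij.2 - 1)) / h

/-- The discrete operator
`L^h p = −D((H/ρ)Gp) + (GH)(1/m)(Σ p GH h²) + J^h 𝕀⁻¹ (Σ p J^h h²)` on the 2-D MAC grid
(with scalar inertia `I`). -/
noncomputable def Lh (h m I : ℝ) (ρx ρy Hx Hy Jh : ℤ × ℤ → ℝ) (p : ℤ × ℤ → ℝ)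
    (ij : ℤ × ℤ) : ℝ :=
  -(((Hx ij / ρx ij) * ((p (ij.1 + 1, ij.2) - p ij) / h)
      - (Hx (ij.1 - 1, ij.2) / ρx (ij.1 - 1, ij.2)) * ((p ij - p (ij.1 - 1, ij.2)) / h)) / h
    + ((Hy ij / ρy ij) * ((p (ij.1, ij.2 + 1) - p ij) / h)
      - (Hy (ij.1, ij.2 - 1) / ρy (ij.1, ij.2 - 1)) * ((p ij - p (ij.1, ij.2 - 1)) / h)) / h)
  + (GHx h Hx ij * (∑ᶠ kl : ℤ × ℤ, p kl * GHx h Hx kl)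
      + GHy h Hy ij * (∑ᶠ kl : ℤ × ℤ, p kl * GHy h Hy kl)) * h ^ 2 / m
  + Jh ij * (∑ᶠ kl : ℤ × ℤ, p kl * Jh kl) * h ^ 2 / I

/-- The discrete kinetic energy
`E_h(U,v,ω) = ½∫ρH U·U dΩ^h + ½m|v|² + ½ω·𝕀ω` on the 2-D MAC grid. -/
noncomputable def Eh (h m I : ℝ) (ρx ρy Hx Hy : ℤ × ℤ → ℝ)
    (ux vy : ℤ × ℤ → ℝ) (v : ℝ × ℝ) (ω : ℝ) : ℝ :=
  (1 / 2) * (∑ᶠ ij : ℤ × ℤ, (ρx ij * Hx ij * ux ij ^ 2 + ρy ij * Hy ij * vy ij ^ 2) * h ^ 2)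
    + (1 / 2) * m * (v.1 ^ 2 + v.2 ^ 2) + (1 / 2) * I * ω ^ 2


open Function

/-- Shift equivalence in the x-direction. -/
private def sX : ℤ × ℤ ≃ ℤ × ℤ where
  toFun ij := (ij.1 + 1, ij.2)
  invFun ij := (ij.1 - 1, ij.2)
  left_inv ij := by cases ij; simp
  right_inv ij := by cases ij; simp

/-- Shift equivalence in the y-direction. -/
private def sY : ℤ × ℤ ≃ ℤ × ℤ where
  toFun ij := (ij.1, ij.2 + 1)
  invFun ij := (ij.1, ij.2 - 1)
  left_inv ij := by cases ij; simp
  right_inv ij := by cases ij; simp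

private lemma fin_subset {f g : ℤ × ℤ → ℝ} (hf : (support f).Finite)
    (h : ∀ x, f x = 0 → g x = 0) : (support g).Finite :=
  hf.subset fun x hx hfx => hx (h x hfx)

/-- Discrete summation by parts in the x-direction. -/
private lemma sbpX (h : ℝ) (a b : ℤ × ℤ → ℝ) (ha : (support a).Finite)
    (hb : (support b).Finite) :
    ∑ᶠ ij : ℤ × ℤ, a ij * ((b ij - b (ij.1 - 1, ij.2)) / h)
      = -∑ᶠ ij : ℤ × ℤ, ((a (ij.1 + 1, ij.2) - a ij) / h) * b ij := by
  have hfin1 : (support fun ij : ℤ × ℤ => a ij * b ij / h).Finite :=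
    fin_subset ha fun x hx => by simp [hx]
  have hfin2 : (support fun ij : ℤ × ℤ => a ij * b (ij.1 - 1, ij.2) / h).Finite :=
    fin_subset ha fun x hx => by simp [hx]
  have hfin3 : (support fun ij : ℤ × ℤ => a (ij.1 + 1, ij.2) * b ij / h).Finite :=
    fin_subset hb fun x hx => by simp [hx]
  have step1 : ∀ ij : ℤ × ℤ, a ij * ((b ij - b (ij.1 - 1, ij.2)) / h)
      = a ij * b ij / h - a ij * b (ij.1 - 1, ij.2) / h := fun ij => by ring
  rw [finsum_congr step1, finsum_sub_distrib hfin1 hfin2]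
  have shift : ∑ᶠ ij : ℤ × ℤ, a ij * b (ij.1 - 1, ij.2) / h
      = ∑ᶠ ij : ℤ × ℤ, a (ij.1 + 1, ij.2) * b ij / h := by
    have t := finsum_comp_equiv sX (f := fun ij : ℤ × ℤ => a ij * b (ij.1 - 1, ij.2) / h)
    rw [← t]
    exact finsum_congr fun ij => by cases ij; simp [sX]
  rw [shift]
  have step2 : ∀ ij : ℤ × ℤ, ((a (ij.1 + 1, ij.2) - a ij) / h) * b ij
      = a (ij.1 + 1, ij.2) * b ij / h - a ij * b ij / h := fun ij => by ring
  rw [finsum_congr step2, finsum_sub_distrib hfin3 hfin1]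
  ring

/-- Discrete summation by parts in the y-direction. -/
private lemma sbpY (h : ℝ) (a b : ℤ × ℤ → ℝ) (ha : (support a).Finite)
    (hb : (support b).Finite) :
    ∑ᶠ ij : ℤ × ℤ, a ij * ((b ij - b (ij.1, ij.2 - 1)) / h)
      = -∑ᶠ ij : ℤ × ℤ, ((a (ij.1, ij.2 + 1) - a ij) / h) * b ij := by
  have hfin1 : (support fun ij : ℤ × ℤ => a ij * b ij / h).Finite :=
    fin_subset ha fun x hx => by simp [hx]
  have hfin2 : (support fun ij : ℤ × ℤ => a ij * b (ij.1, ij.2 - 1) / h).Finite :=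
    fin_subset ha fun x hx => by simp [hx]
  have hfin3 : (support fun ij : ℤ × ℤ => a (ij.1, ij.2 + 1) * b ij / h).Finite :=
    fin_subset hb fun x hx => by simp [hx]
  have step1 : ∀ ij : ℤ × ℤ, a ij * ((b ij - b (ij.1, ij.2 - 1)) / h)
      = a ij * b ij / h - a ij * b (ij.1, ij.2 - 1) / h := fun ij => by ring
  rw [finsum_congr step1, finsum_sub_distrib hfin1 hfin2]
  have shift : ∑ᶠ ij : ℤ × ℤ, a ij * b (ij.1, ij.2 - 1) / h
      = ∑ᶠ ij : ℤ × ℤ, a (ij.1, ij.2 + 1) * b ij / h := by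
    have t := finsum_comp_equiv sY (f := fun ij : ℤ × ℤ => a ij * b (ij.1, ij.2 - 1) / h)
    rw [← t]
    exact finsum_congr fun ij => by cases ij; simp [sY]
  rw [shift]
  have step2 : ∀ ij : ℤ × ℤ, ((a (ij.1, ij.2 + 1) - a ij) / h) * b ij
      = a (ij.1, ij.2 + 1) * b ij / h - a ij * b ij / h := fun ij => by ring
  rw [finsum_congr step2, finsum_sub_distrib hfin3 hfin1]
  ring

/-- Splitting a finite sum of five functions, all dominated by a function `g`
with finite support. -/
private lemma finsum_add5 {f1 f2 f3 f4 f5 g : ℤ × ℤ → ℝ} (hg : (support g).Finite)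
    (h1 : ∀ ij, g ij = 0 → f1 ij = 0) (h2 : ∀ ij, g ij = 0 → f2 ij = 0)
    (h3 : ∀ ij, g ij = 0 → f3 ij = 0) (h4 : ∀ ij, g ij = 0 → f4 ij = 0)
    (h5 : ∀ ij, g ij = 0 → f5 ij = 0) :
    ∑ᶠ ij : ℤ × ℤ, (f1 ij + f2 ij + f3 ij + f4 ij + f5 ij)
      = (∑ᶠ ij : ℤ × ℤ, f1 ij) + (∑ᶠ ij : ℤ × ℤ, f2 ij) + (∑ᶠ ij : ℤ × ℤ, f3 ij)
        + (∑ᶠ ij : ℤ × ℤ, f4 ij) + (∑ᶠ ij : ℤ × ℤ, f5 ij) := by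
  have F : ∀ (f : ℤ × ℤ → ℝ), (∀ ij, g ij = 0 → f ij = 0) → (support f).Finite :=
    fun f hf => fin_subset hg hf
  have h12 : ∀ ij, g ij = 0 → f1 ij + f2 ij = 0 := fun ij h0 => by
    rw [h1 ij h0, h2 ij h0]; ring
  have h123 : ∀ ij, g ij = 0 → f1 ij + f2 ij + f3 ij = 0 := fun ij h0 => by
    rw [h12 ij h0, h3 ij h0]; ring
  have h1234 : ∀ ij, g ij = 0 → f1 ij + f2 ij + f3 ij + f4 ij = 0 := fun ij h0 => by
    rw [h123 ij h0, h4 ij h0]; ring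
  calc ∑ᶠ ij : ℤ × ℤ, (f1 ij + f2 ij + f3 ij + f4 ij + f5 ij)
      = (∑ᶠ ij : ℤ × ℤ, (f1 ij + f2 ij + f3 ij + f4 ij)) + ∑ᶠ ij : ℤ × ℤ, f5 ij :=
        finsum_add_distrib (F _ h1234) (F _ h5)
    _ = ((∑ᶠ ij : ℤ × ℤ, (f1 ij + f2 ij + f3 ij)) + ∑ᶠ ij : ℤ × ℤ, f4 ij)
          + ∑ᶠ ij : ℤ × ℤ, f5 ij := by
        rw [finsum_add_distrib (F _ h123) (F _ h4)]
    _ = (((∑ᶠ ij : ℤ × ℤ, (f1 ij + f2 ij)) + ∑ᶠ ij : ℤ × ℤ, f3 ij) + ∑ᶠ ij : ℤ × ℤ, f4 ij)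
          + ∑ᶠ ij : ℤ × ℤ, f5 ij := by
        rw [finsum_add_distrib (F _ h12) (F _ h3)]
    _ = (∑ᶠ ij : ℤ × ℤ, f1 ij) + (∑ᶠ ij : ℤ × ℤ, f2 ij) + (∑ᶠ ij : ℤ × ℤ, f3 ij)
          + (∑ᶠ ij : ℤ × ℤ, f4 ij) + (∑ᶠ ij : ℤ × ℤ, f5 ij) := by
        rw [finsum_add_distrib (F _ h1) (F _ h2)]

/-- (Discrete energy stability.)  If
`(U,v,ω) = (U*,v*,ω*) − (ρ⁻¹Gp, m⁻¹Σ(pGH)h², 𝕀⁻¹Σ(pJ^h)h²)` where `p` solves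
`L^h p = −D(HU*) + v*·GH + ω*·J^h`, then `E_h(U*,v*,ω*) ≥ E_h(U,v,ω)`. -/
theorem discrete_energy_stability
    (h m I : ℝ) (hh : 0 < h) (hm : 0 < m) (hI : 0 < I)
    (ρx ρy : ℤ × ℤ → ℝ) (hρx : ∀ ij, 0 < ρx ij) (hρy : ∀ ij, 0 < ρy ij)
    (Hx Hy : ℤ × ℤ → ℝ)
    (hHx01 : ∀ ij, Hx ij ∈ Set.Icc (0 : ℝ) 1) (hHy01 : ∀ ij, Hy ij ∈ Set.Icc (0 : ℝ) 1)
    (hHx : (Function.support Hx).Finite) (hHy : (Function.support Hy).Finite)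
    (Jh : ℤ × ℤ → ℝ) (hJh : (Function.support Jh).Finite)
    (uxs vys : ℤ × ℤ → ℝ)
    (huxs : (Function.support uxs).Finite) (hvys : (Function.support vys).Finite)
    (vs : ℝ × ℝ) (ωs : ℝ)
    (p : ℤ × ℤ → ℝ) (hp : (Function.support p).Finite)
    -- p solves L^h p = −D(H U*) + v*·GH + ω*·J^h
    (hsol : ∀ ij : ℤ × ℤ, Lh h m I ρx ρy Hx Hy Jh p ij
      = -((Hx ij * uxs ij - Hx (ij.1 - 1, ij.2) * uxs (ij.1 - 1, ij.2)) / h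
          + (Hy ij * vys ij - Hy (ij.1, ij.2 - 1) * vys (ij.1, ij.2 - 1)) / h)
        + (vs.1 * GHx h Hx ij + vs.2 * GHy h Hy ij) + ωs * Jh ij) :
    Eh h m I ρx ρy Hx Hy uxs vys vs ωs
      ≥ Eh h m I ρx ρy Hx Hy
          (fun ij => uxs ij - (1 / ρx ij) * ((p (ij.1 + 1, ij.2) - p ij) / h))
          (fun ij => vys ij - (1 / ρy ij) * ((p (ij.1, ij.2 + 1) - p ij) / h))
          (vs.1 - (1 / m) * ((∑ᶠ ij : ℤ × ℤ, p ij * GHx h Hx ij) * h ^ 2),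
            vs.2 - (1 / m) * ((∑ᶠ ij : ℤ × ℤ, p ij * GHy h Hy ij) * h ^ 2))
          (ωs - (1 / I) * ((∑ᶠ ij : ℤ × ℤ, p ij * Jh ij) * h ^ 2)) := by
  classical
  have hmne : m ≠ 0 := hm.ne'
  have hIne : I ≠ 0 := hI.ne'
  have hρxne : ∀ ij, ρx ij ≠ 0 := fun ij => (hρx ij).ne'
  have hρyne : ∀ ij, ρy ij ≠ 0 := fun ij => (hρy ij).ne'
  set Sx := ∑ᶠ ij : ℤ × ℤ, p ij * GHx h Hx ij with hSx
  set Sy := ∑ᶠ ij : ℤ × ℤ, p ij * GHy h Hy ij with hSy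
  set Sj := ∑ᶠ ij : ℤ × ℤ, p ij * Jh ij with hSj
  set dv1 := 1 / m * (Sx * h ^ 2) with hdv1
  set dv2 := 1 / m * (Sy * h ^ 2) with hdv2
  set dw := 1 / I * (Sj * h ^ 2) with hdw
  set Qx := ∑ᶠ ij : ℤ × ℤ, Hx ij / ρx ij * ((p (ij.1 + 1, ij.2) - p ij) / h) ^ 2 with hQx
  set Qy := ∑ᶠ ij : ℤ × ℤ, Hy ij / ρy ij * ((p (ij.1, ij.2 + 1) - p ij) / h) ^ 2 with hQy
  set Px := ∑ᶠ ij : ℤ × ℤ, ((p (ij.1 + 1, ij.2) - p ij) / h) * (Hx ij * uxs ij) with hPx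
  set Py := ∑ᶠ ij : ℤ × ℤ, ((p (ij.1, ij.2 + 1) - p ij) / h) * (Hy ij * vys ij) with hPy
  set Estar := ∑ᶠ ij : ℤ × ℤ,
      (ρx ij * Hx ij * uxs ij ^ 2 + ρy ij * Hy ij * vys ij ^ 2) * h ^ 2 with hEstar
  -- nonnegativity of the quadratic sums
  have hQx0 : 0 ≤ Qx := by
    rw [hQx]
    exact finsum_nonneg fun ij =>
      mul_nonneg (div_nonneg (hHx01 ij).1 (hρx ij).le) (sq_nonneg _)
  have hQy0 : 0 ≤ Qy := by
    rw [hQy]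
    exact finsum_nonneg fun ij =>
      mul_nonneg (div_nonneg (hHy01 ij).1 (hρy ij).le) (sq_nonneg _)
  -- basic algebraic facts about the velocity corrections
  have hm1 : m * dv1 = Sx * h ^ 2 := by rw [hdv1]; field_simp
  have hm2 : m * dv2 = Sy * h ^ 2 := by rw [hdv2]; field_simp
  have hw1 : I * dw = Sj * h ^ 2 := by rw [hdw]; field_simp
  -- summation-by-parts identities
  have e1 : ∑ᶠ ij : ℤ × ℤ, p ij * ((Hx ij / ρx ij * ((p (ij.1 + 1, ij.2) - p ij) / h)
      - Hx (ij.1 - 1, ij.2) / ρx (ij.1 - 1, ij.2) * ((p ij - p (ij.1 - 1, ij.2)) / h)) / h)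
      = -Qx := by
    have hb : (support fun ij : ℤ × ℤ =>
        Hx ij / ρx ij * ((p (ij.1 + 1, ij.2) - p ij) / h)).Finite :=
      fin_subset hHx fun x hx => by simp [hx]
    have t := sbpX h p (fun ij => Hx ij / ρx ij * ((p (ij.1 + 1, ij.2) - p ij) / h)) hp hb
    simp only [Int.sub_add_cancel] at t
    rw [hQx, show (∑ᶠ ij : ℤ × ℤ, Hx ij / ρx ij * ((p (ij.1 + 1, ij.2) - p ij) / h) ^ 2)
        = ∑ᶠ ij : ℤ × ℤ, ((p (ij.1 + 1, ij.2) - p ij) / h)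
          * (Hx ij / ρx ij * ((p (ij.1 + 1, ij.2) - p ij) / h))
      from finsum_congr fun ij => by ring]
    exact t
  have e2 : ∑ᶠ ij : ℤ × ℤ, p ij * ((Hy ij / ρy ij * ((p (ij.1, ij.2 + 1) - p ij) / h)
      - Hy (ij.1, ij.2 - 1) / ρy (ij.1, ij.2 - 1) * ((p ij - p (ij.1, ij.2 - 1)) / h)) / h)
      = -Qy := by
    have hb : (support fun ij : ℤ × ℤ =>
        Hy ij / ρy ij * ((p (ij.1, ij.2 + 1) - p ij) / h)).Finite :=
      fin_subset hHy fun x hx => by simp [hx]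
    have t := sbpY h p (fun ij => Hy ij / ρy ij * ((p (ij.1, ij.2 + 1) - p ij) / h)) hp hb
    simp only [Int.sub_add_cancel] at t
    rw [hQy, show (∑ᶠ ij : ℤ × ℤ, Hy ij / ρy ij * ((p (ij.1, ij.2 + 1) - p ij) / h) ^ 2)
        = ∑ᶠ ij : ℤ × ℤ, ((p (ij.1, ij.2 + 1) - p ij) / h)
          * (Hy ij / ρy ij * ((p (ij.1, ij.2 + 1) - p ij) / h))
      from finsum_congr fun ij => by ring]
    exact t
  have eP1 : ∑ᶠ ij : ℤ × ℤ,
      p ij * ((Hx ij * uxs ij - Hx (ij.1 - 1, ij.2) * uxs (ij.1 - 1, ij.2)) / h) = -Px := by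
    have hb : (support fun ij : ℤ × ℤ => Hx ij * uxs ij).Finite :=
      fin_subset hHx fun x hx => by simp [hx]
    have t := sbpX h p (fun ij => Hx ij * uxs ij) hp hb
    rw [hPx]
    exact t
  have eP2 : ∑ᶠ ij : ℤ × ℤ,
      p ij * ((Hy ij * vys ij - Hy (ij.1, ij.2 - 1) * vys (ij.1, ij.2 - 1)) / h) = -Py := by
    have hb : (support fun ij : ℤ × ℤ => Hy ij * vys ij).Finite :=
      fin_subset hHy fun x hx => by simp [hx]
    have t := sbpY h p (fun ij => Hy ij * vys ij) hp hb
    rw [hPy]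
    exact t
  -- the weak form of the equation: multiply by p and sum
  have lhs_eq : ∑ᶠ ij : ℤ × ℤ, p ij * Lh h m I ρx ρy Hx Hy Jh p ij
      = Qx + Qy + Sx * dv1 + Sy * dv2 + Sj * dw := by
    have step : ∀ ij : ℤ × ℤ, p ij * Lh h m I ρx ρy Hx Hy Jh p ij
        = -(p ij * ((Hx ij / ρx ij * ((p (ij.1 + 1, ij.2) - p ij) / h)
            - Hx (ij.1 - 1, ij.2) / ρx (ij.1 - 1, ij.2) * ((p ij - p (ij.1 - 1, ij.2)) / h)) / h))
          + -(p ij * ((Hy ij / ρy ij * ((p (ij.1, ij.2 + 1) - p ij) / h)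
            - Hy (ij.1, ij.2 - 1) / ρy (ij.1, ij.2 - 1) * ((p ij - p (ij.1, ij.2 - 1)) / h)) / h))
          + (p ij * GHx h Hx ij) * dv1 + (p ij * GHy h Hy ij) * dv2 + (p ij * Jh ij) * dw := by
      intro ij
      simp only [Lh]
      rw [← hSx, ← hSy, ← hSj, hdv1, hdv2, hdw]
      ring
    rw [finsum_congr step]
    refine Eq.trans (finsum_add5 (g := p) hp ?_ ?_ ?_ ?_ ?_) ?_
    · intro ij h0; simp [h0]
    · intro ij h0; simp [h0]
    · intro ij h0; simp [h0]
    · intro ij h0; simp [h0]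
    · intro ij h0; simp [h0]
    rw [finsum_neg_distrib, finsum_neg_distrib, e1, e2,
      ← finsum_mul (fun ij : ℤ × ℤ => p ij * GHx h Hx ij) dv1,
      ← finsum_mul (fun ij : ℤ × ℤ => p ij * GHy h Hy ij) dv2,
      ← finsum_mul (fun ij : ℤ × ℤ => p ij * Jh ij) dw,
      ← hSx, ← hSy, ← hSj]
    ring
  have rhs_eq : ∑ᶠ ij : ℤ × ℤ, p ij *
      (-((Hx ij * uxs ij - Hx (ij.1 - 1, ij.2) * uxs (ij.1 - 1, ij.2)) / h
          + (Hy ij * vys ij - Hy (ij.1, ij.2 - 1) * vys (ij.1, ij.2 - 1)) / h)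
        + (vs.1 * GHx h Hx ij + vs.2 * GHy h Hy ij) + ωs * Jh ij)
      = Px + Py + Sx * vs.1 + Sy * vs.2 + Sj * ωs := by
    have step : ∀ ij : ℤ × ℤ, p ij *
        (-((Hx ij * uxs ij - Hx (ij.1 - 1, ij.2) * uxs (ij.1 - 1, ij.2)) / h
            + (Hy ij * vys ij - Hy (ij.1, ij.2 - 1) * vys (ij.1, ij.2 - 1)) / h)
          + (vs.1 * GHx h Hx ij + vs.2 * GHy h Hy ij) + ωs * Jh ij)
        = -(p ij * ((Hx ij * uxs ij - Hx (ij.1 - 1, ij.2) * uxs (ij.1 - 1, ij.2)) / h))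
          + -(p ij * ((Hy ij * vys ij - Hy (ij.1, ij.2 - 1) * vys (ij.1, ij.2 - 1)) / h))
          + (p ij * GHx h Hx ij) * vs.1 + (p ij * GHy h Hy ij) * vs.2
          + (p ij * Jh ij) * ωs := fun ij => by ring
    rw [finsum_congr step]
    refine Eq.trans (finsum_add5 (g := p) hp ?_ ?_ ?_ ?_ ?_) ?_
    · intro ij h0; simp [h0]
    · intro ij h0; simp [h0]
    · intro ij h0; simp [h0]
    · intro ij h0; simp [h0]
    · intro ij h0; simp [h0]
    rw [finsum_neg_distrib, finsum_neg_distrib, eP1, eP2,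
      ← finsum_mul (fun ij : ℤ × ℤ => p ij * GHx h Hx ij) vs.1,
      ← finsum_mul (fun ij : ℤ × ℤ => p ij * GHy h Hy ij) vs.2,
      ← finsum_mul (fun ij : ℤ × ℤ => p ij * Jh ij) ωs,
      ← hSx, ← hSy, ← hSj]
    ring
  have key : Qx + Qy + Sx * dv1 + Sy * dv2 + Sj * dw
      = Px + Py + Sx * vs.1 + Sy * vs.2 + Sj * ωs := by
    rw [← lhs_eq, ← rhs_eq]
    exact finsum_congr fun ij => by rw [hsol ij]
    -- expanding the kinetic energy of the projected field
  have habs : (support fun ij : ℤ × ℤ => |Hx ij| + |Hy ij|).Finite := by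
    refine (hHx.union hHy).subset fun x hx => ?_
    rw [Set.mem_union]
    by_contra hc
    push_neg at hc
    have h1 : Hx x = 0 := by
      have := hc.1; simpa [Function.mem_support, not_not] using this
    have h2 : Hy x = 0 := by
      have := hc.2; simpa [Function.mem_support, not_not] using this
    exact hx (by simp [h1, h2])
  have habs0 : ∀ ij : ℤ × ℤ, |Hx ij| + |Hy ij| = 0 → Hx ij = 0 ∧ Hy ij = 0 := by
    intro ij h0
    have l1 := abs_nonneg (Hx ij)
    have l2 := abs_nonneg (Hy ij)
    constructor
    · exact abs_eq_zero.mp (by linarith)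
    · exact abs_eq_zero.mp (by linarith)
  have enew : (∑ᶠ ij : ℤ × ℤ,
      (ρx ij * Hx ij * (uxs ij - 1 / ρx ij * ((p (ij.1 + 1, ij.2) - p ij) / h)) ^ 2
        + ρy ij * Hy ij * (vys ij - 1 / ρy ij * ((p (ij.1, ij.2 + 1) - p ij) / h)) ^ 2) * h ^ 2)
      = Estar + Px * (-(2 * h ^ 2)) + Py * (-(2 * h ^ 2)) + Qx * h ^ 2 + Qy * h ^ 2 := by
    have step : ∀ ij : ℤ × ℤ,
        (ρx ij * Hx ij * (uxs ij - 1 / ρx ij * ((p (ij.1 + 1, ij.2) - p ij) / h)) ^ 2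
          + ρy ij * Hy ij * (vys ij - 1 / ρy ij * ((p (ij.1, ij.2 + 1) - p ij) / h)) ^ 2) * h ^ 2
        = (ρx ij * Hx ij * uxs ij ^ 2 + ρy ij * Hy ij * vys ij ^ 2) * h ^ 2
          + (((p (ij.1 + 1, ij.2) - p ij) / h) * (Hx ij * uxs ij)) * (-(2 * h ^ 2))
          + (((p (ij.1, ij.2 + 1) - p ij) / h) * (Hy ij * vys ij)) * (-(2 * h ^ 2))
          + (Hx ij / ρx ij * ((p (ij.1 + 1, ij.2) - p ij) / h) ^ 2) * h ^ 2
          + (Hy ij / ρy ij * ((p (ij.1, ij.2 + 1) - p ij) / h) ^ 2) * h ^ 2 := by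
      intro ij
      have r1 := hρxne ij
      have r2 := hρyne ij
      field_simp
      ring
    rw [finsum_congr step]
    refine Eq.trans (finsum_add5 (g := fun ij : ℤ × ℤ => |Hx ij| + |Hy ij|) habs ?_ ?_ ?_ ?_ ?_) ?_
    · intro ij h0; obtain ⟨hx0, hy0⟩ := habs0 ij h0; simp [hx0, hy0]
    · intro ij h0; obtain ⟨hx0, hy0⟩ := habs0 ij h0; simp [hx0, hy0]
    · intro ij h0; obtain ⟨hx0, hy0⟩ := habs0 ij h0; simp [hx0, hy0]
    · intro ij h0; obtain ⟨hx0, hy0⟩ := habs0 ij h0; simp [hx0, hy0]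
    · intro ij h0; obtain ⟨hx0, hy0⟩ := habs0 ij h0; simp [hx0, hy0]
    rw [← hEstar,
      ← finsum_mul (fun ij : ℤ × ℤ => ((p (ij.1 + 1, ij.2) - p ij) / h) * (Hx ij * uxs ij))
        (-(2 * h ^ 2)),
      ← finsum_mul (fun ij : ℤ × ℤ => ((p (ij.1, ij.2 + 1) - p ij) / h) * (Hy ij * vys ij))
        (-(2 * h ^ 2)),
      ← finsum_mul (fun ij : ℤ × ℤ => Hx ij / ρx ij * ((p (ij.1 + 1, ij.2) - p ij) / h) ^ 2)
        (h ^ 2),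
      ← finsum_mul (fun ij : ℤ × ℤ => Hy ij / ρy ij * ((p (ij.1, ij.2 + 1) - p ij) / h) ^ 2)
        (h ^ 2),
      ← hPx, ← hPy, ← hQx, ← hQy]
  -- the energy difference is a sum of nonnegative terms
  have main : Eh h m I ρx ρy Hx Hy uxs vys vs ωs
      - Eh h m I ρx ρy Hx Hy
          (fun ij => uxs ij - 1 / ρx ij * ((p (ij.1 + 1, ij.2) - p ij) / h))
          (fun ij => vys ij - 1 / ρy ij * ((p (ij.1, ij.2 + 1) - p ij) / h))
          (vs.1 - dv1, vs.2 - dv2) (ωs - dw)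
      = h ^ 2 / 2 * Qx + h ^ 2 / 2 * Qy + m / 2 * dv1 ^ 2 + m / 2 * dv2 ^ 2 + I / 2 * dw ^ 2 := by
    simp only [Eh]
    rw [← hEstar, enew]
    linear_combination (-(h ^ 2)) * key + (vs.1 - dv1) * hm1 + (vs.2 - dv2) * hm2
      + (ωs - dw) * hw1
  have t1 : 0 ≤ h ^ 2 / 2 * Qx := mul_nonneg (by positivity) hQx0
  have t2 : 0 ≤ h ^ 2 / 2 * Qy := mul_nonneg (by positivity) hQy0
  have t3 : 0 ≤ m / 2 * dv1 ^ 2 := by positivity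
  have t4 : 0 ≤ m / 2 * dv2 ^ 2 := by positivity
  have t5 : 0 ≤ I / 2 * dw ^ 2 := by positivity
  linarith [main, t1, t2, t3, t4, t5]
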